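/- Let p₁, p₂ > 1 and δ₁, δ₂ ≥ 0, and suppose p and δ satisfy 1 < p ≤ min{p₁,p₂}, max{δ₁,δ₂} ≤ δ ≤ δ₁ + δ₂, and p + 2δ ≤ min{p₁ + 2δ₁, p₂ + 2δ₂}. Set δ₀ := min{δ₁,δ₂}. Then for all integers m, n ≥ 1: Σ_{ℓ=1}^∞ ⟨m−n⟩^p·max{m,n}^{2δ} / (⟨m−ℓ⟩^{p₁}·max{m,ℓ}^{2δ₁}·⟨n−ℓ⟩^{p₂}·max{n,ℓ}^{2δ₂}) ≤ 2^{p+2(δ−δ₀)}·(2 + 4ζ(p)). -/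

import Mathlib

set_option maxHeartbeats 1000000


noncomputable section

/-- `⟨x⟩ := max {1, |x|}`. -/
def jap (x : ℝ) : ℝ := max 1 |x|

/-- The Riemann zeta function `ζ(s) = Σ_{n≥1} n^{-s}` (for real `s > 1`). -/
def rzeta (s : ℝ) : ℝ := ∑' n : ℕ+, (((n : ℕ) : ℝ) ^ s)⁻¹

open Real

lemma jap_one_le (x : ℝ) : 1 ≤ jap x := le_max_left _ _
lemma jap_pos (x : ℝ) : 0 < jap x := lt_of_lt_of_le one_pos (jap_one_le x)
lemma jap_sub_comm (x y : ℝ) : jap (x - y) = jap (y - x) := by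
  rw [jap, jap, abs_sub_comm]

lemma mk_coe : ∀ (k:ℕ) (h:0<k), ((⟨k,h⟩:ℕ+):ℕ) = k := fun _ _ => rfl

lemma master {p₁ p₂ δ₁ δ₂ p δ : ℝ}
    (hδ₁0 : 0 ≤ δ₁) (hp0 : 0 ≤ p)
    (hpp₁ : p + 2*(δ-δ₁) ≤ p₁) (hpp₂ : p ≤ p₂)
    (hδδ₁ : δ₁ ≤ δ) (hδB : δ - δ₁ ≤ δ₂)
    {a b A B M J : ℝ}
    (ha : 1 ≤ a) (hb : 1 ≤ b) (hA : 1 ≤ A) (hB : 1 ≤ B) (hM : 1 ≤ M) (hJ0 : 0 ≤ J)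
    (hJab : J * min a b ≤ 2*(a*b)) (hMA : M ≤ A) (hMB : M ≤ 2*(a*B)) :
    (J ^ p * M ^ (2*δ)) * (min a b) ^ p ≤
      2 ^ (p + 2*(δ-δ₁)) * (a^p₁ * A^(2*δ₁) * (b^p₂ * B^(2*δ₂))) := by
  have hmin : (1:ℝ) ≤ min a b := le_min ha hb
  have hmin0 : (0:ℝ) ≤ min a b := by linarith
  set e := 2*(δ-δ₁) with he
  have he0 : 0 ≤ e := by simp only [he]; linarith
  have hM0 : (0:ℝ) < M := by linarith
  have h1 : (J ^ p * M ^ (2*δ)) * (min a b) ^ p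
      = (J * min a b) ^ p * (M ^ (2*δ₁) * M ^ e) := by
    rw [mul_rpow hJ0 hmin0, ← rpow_add hM0]
    rw [he]; ring_nf
  rw [h1]
  have h2 : (J * min a b) ^ p ≤ (2*(a*b)) ^ p :=
    rpow_le_rpow (by positivity) hJab hp0
  have h3 : M ^ (2*δ₁) ≤ A ^ (2*δ₁) := rpow_le_rpow (le_of_lt hM0) hMA (by linarith)
  have h4 : M ^ e ≤ (2*(a*B)) ^ e := rpow_le_rpow (le_of_lt hM0) hMB he0
  have step : (J * min a b) ^ p * (M ^ (2*δ₁) * M ^ e)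
      ≤ (2*(a*b)) ^ p * (A ^ (2*δ₁) * ((2*(a*B)) ^ e)) := by
    apply mul_le_mul h2 (mul_le_mul h3 h4 (by positivity) (by positivity)) (by positivity)
      (by positivity)
  refine step.trans ?_
  have e1 : (2*(a*b):ℝ) ^ p = 2^p * (a^p * b^p) := by
    rw [mul_rpow (by norm_num) (by positivity), mul_rpow (by linarith) (by linarith)]
  have e2 : (2*(a*B):ℝ) ^ e = 2^e * (a^e * B^e) := by
    rw [mul_rpow (by norm_num) (by positivity), mul_rpow (by linarith) (by linarith)]
  rw [e1, e2]
  have e3 : (2:ℝ)^(p+e) = 2^p * 2^e := rpow_add (by norm_num) _ _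
  have e4 : a^(p+e) = a^p * a^e := rpow_add (by linarith) _ _
  have goal' : 2^p * (a^p * b^p) * (A ^ (2*δ₁) * (2^e * (a^e * B^e)))
      = 2^(p+e) * ((a^(p+e) * A^(2*δ₁)) * (b^p * B^e)) := by rw [e3, e4]; ring
  rw [goal']
  have f1 : a^(p+e) ≤ a^p₁ := rpow_le_rpow_of_exponent_le ha hpp₁
  have f2 : b^p ≤ b^p₂ := rpow_le_rpow_of_exponent_le hb hpp₂
  have f3 : B^e ≤ B^(2*δ₂) := rpow_le_rpow_of_exponent_le hB (by simp only [he]; linarith)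
  have hle : (a^(p+e) * A^(2*δ₁)) * (b^p * B^e) ≤ (a^p₁ * A^(2*δ₁)) * (b^p₂ * B^(2*δ₂)) := by
    apply mul_le_mul (mul_le_mul f1 le_rfl (by positivity) (by positivity))
      (mul_le_mul f2 f3 (by positivity) (by positivity)) (by positivity) (by positivity)
  have h2e : (0:ℝ) ≤ 2^(p+e) := by positivity
  calc 2^(p+e) * ((a^(p+e) * A^(2*δ₁)) * (b^p * B^e))
      ≤ 2^(p+e) * ((a^p₁ * A^(2*δ₁)) * (b^p₂ * B^(2*δ₂))) :=
        mul_le_mul_of_nonneg_left hle h2e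
    _ = 2^(p+e) * (a^p₁ * A^(2*δ₁) * (b^p₂ * B^(2*δ₂))) := by ring

lemma pointwise (p₁ p₂ δ₁ δ₂ p δ : ℝ)
    (hδ₁ : 0 ≤ δ₁) (hδ₂ : 0 ≤ δ₂)
    (hp : 1 < p) (hpmin : p ≤ min p₁ p₂)
    (hδlow : max δ₁ δ₂ ≤ δ) (hδhigh : δ ≤ δ₁ + δ₂)
    (hsum : p + 2 * δ ≤ min (p₁ + 2 * δ₁) (p₂ + 2 * δ₂))
    (m n ℓ : ℕ+) :
    jap (((m : ℕ) : ℝ) - ((n : ℕ) : ℝ)) ^ p * (((max m n : ℕ+) : ℕ) : ℝ) ^ (2 * δ) /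
          (jap (((m : ℕ) : ℝ) - ((ℓ : ℕ) : ℝ)) ^ p₁ *
            (((max m ℓ : ℕ+) : ℕ) : ℝ) ^ (2 * δ₁) *
            (jap (((n : ℕ) : ℝ) - ((ℓ : ℕ) : ℝ)) ^ p₂ *
              (((max n ℓ : ℕ+) : ℕ) : ℝ) ^ (2 * δ₂)))
      ≤ 2 ^ (p + 2 * (δ - min δ₁ δ₂)) * (jap (((m : ℕ) : ℝ) - ((ℓ : ℕ) : ℝ)) ^ p)⁻¹
        + 2 ^ (p + 2 * (δ - min δ₁ δ₂)) * (jap (((n : ℕ) : ℝ) - ((ℓ : ℕ) : ℝ)) ^ p)⁻¹ := by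
  have hp0 : (0:ℝ) ≤ p := by linarith
  have hsum1 : p + 2*δ ≤ p₁ + 2*δ₁ := le_trans hsum (min_le_left _ _)
  have hsum2 : p + 2*δ ≤ p₂ + 2*δ₂ := le_trans hsum (min_le_right _ _)
  have hpp₁ : p ≤ p₁ := le_trans hpmin (min_le_left _ _)
  have hpp₂ : p ≤ p₂ := le_trans hpmin (min_le_right _ _)
  have hδd₁ : δ₁ ≤ δ := le_trans (le_max_left _ _) hδlow
  have hδd₂ : δ₂ ≤ δ := le_trans (le_max_right _ _) hδlow
  set a := jap (((m : ℕ) : ℝ) - ((ℓ : ℕ) : ℝ)) with hadef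
  set b := jap (((n : ℕ) : ℝ) - ((ℓ : ℕ) : ℝ)) with hbdef
  set A := (((max m ℓ : ℕ+) : ℕ) : ℝ) with hAdef
  set B := (((max n ℓ : ℕ+) : ℕ) : ℝ) with hBdef
  set M := (((max m n : ℕ+) : ℕ) : ℝ) with hMdef
  set J := jap (((m : ℕ) : ℝ) - ((n : ℕ) : ℝ)) with hJdef
  set C := (2:ℝ) ^ (p + 2 * (δ - min δ₁ δ₂)) with hCdef
  have ha : 1 ≤ a := jap_one_le _
  have hb : 1 ≤ b := jap_one_le _
  have hA : (1:ℝ) ≤ A := by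
    have : 1 ≤ ((max m ℓ : ℕ+) : ℕ) := (max m ℓ).pos
    rw [hAdef]; exact_mod_cast this
  have hB : (1:ℝ) ≤ B := by
    have : 1 ≤ ((max n ℓ : ℕ+) : ℕ) := (max n ℓ).pos
    rw [hBdef]; exact_mod_cast this
  have hM : (1:ℝ) ≤ M := by
    have : 1 ≤ ((max m n : ℕ+) : ℕ) := (max m n).pos
    rw [hMdef]; exact_mod_cast this
  have hJ0 : (0:ℝ) ≤ J := (jap_pos _).le
  have hlB : ((ℓ:ℕ):ℝ) ≤ B := by
    have h := le_max_right n ℓ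
    rw [hBdef]; exact_mod_cast h
  have hlA : ((ℓ:ℕ):ℝ) ≤ A := by
    have h := le_max_right m ℓ
    rw [hAdef]; exact_mod_cast h
  have habs_a : |((m:ℕ):ℝ) - ((ℓ:ℕ):ℝ)| ≤ a := le_max_right _ _
  have habs_b : |((n:ℕ):ℝ) - ((ℓ:ℕ):ℝ)| ≤ b := le_max_right _ _
  have hJab : J * min a b ≤ 2*(a*b) := by
    have hJle : J ≤ a + b := by
      rw [hJdef, jap]
      apply max_le (by linarith)
      calc |((m:ℕ):ℝ) - ((n:ℕ):ℝ)|
          ≤ |((m:ℕ):ℝ) - ((ℓ:ℕ):ℝ)| + |((n:ℕ):ℝ) - ((ℓ:ℕ):ℝ)| := by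
            rw [abs_sub_comm (((n:ℕ):ℝ)) (((ℓ:ℕ):ℝ))]
            exact abs_sub_le _ _ _
        _ ≤ a + b := add_le_add habs_a habs_b
    have h1 : min a b ≤ a := min_le_left _ _
    have h2 : min a b ≤ b := min_le_right _ _
    have h3 : (0:ℝ) ≤ min a b := le_trans zero_le_one (le_min ha hb)
    nlinarith
  have hD : (0:ℝ) < a^p₁ * A^(2*δ₁) * (b^p₂ * B^(2*δ₂)) := by
    have h1 : (0:ℝ) < a := by rw [hadef]; exact jap_pos _
    have h2 : (0:ℝ) < b := by rw [hbdef]; exact jap_pos _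
    have hA0 : (0:ℝ) < A := by linarith
    have hB0 : (0:ℝ) < B := by linarith
    positivity
  have hminpow : (0:ℝ) < (min a b) ^ p := by
    have : (0:ℝ) < min a b := lt_of_lt_of_le one_pos (le_min ha hb)
    positivity
  have hbound : (J ^ p * M ^ (2*δ)) * (min a b) ^ p
      ≤ C * (a^p₁ * A^(2*δ₁) * (b^p₂ * B^(2*δ₂))) := by
    rcases le_total n m with hnm | hmn
    · -- n ≤ m : M = m
      have hMm : M = ((m:ℕ):ℝ) := by
        rw [hMdef, max_eq_left hnm]
      have hMA : M ≤ A := by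
        rw [hMm, hAdef]
        have h := le_max_left m ℓ
        exact_mod_cast h
      have hMB : M ≤ 2*(a*B) := by
        have h1 : M ≤ a + B := by
          rw [hMm]
          have : ((m:ℕ):ℝ) - ((ℓ:ℕ):ℝ) ≤ |((m:ℕ):ℝ) - ((ℓ:ℕ):ℝ)| := le_abs_self _
          linarith
        nlinarith [mul_nonneg (sub_nonneg.mpr ha) (sub_nonneg.mpr hB)]
      have key := master hδ₁ hp0 (by linarith : p + 2*(δ-δ₁) ≤ p₁) hpp₂ hδd₁
        (by linarith : δ - δ₁ ≤ δ₂) ha hb hA hB hM hJ0 hJab hMA hMB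
      refine key.trans ?_
      apply mul_le_mul_of_nonneg_right _ hD.le
      apply rpow_le_rpow_of_exponent_le one_le_two
      have := min_le_left δ₁ δ₂
      linarith
    · -- m ≤ n : M = n
      have hMm : M = ((n:ℕ):ℝ) := by
        rw [hMdef, max_eq_right hmn]
      have hMB' : M ≤ B := by
        rw [hMm, hBdef]
        have h := le_max_left n ℓ
        exact_mod_cast h
      have hMA' : M ≤ 2*(b*A) := by
        have h1 : M ≤ b + A := by
          rw [hMm]
          have : ((n:ℕ):ℝ) - ((ℓ:ℕ):ℝ) ≤ |((n:ℕ):ℝ) - ((ℓ:ℕ):ℝ)| := le_abs_self _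
          linarith
        nlinarith [mul_nonneg (sub_nonneg.mpr hb) (sub_nonneg.mpr hA)]
      have hJab' : J * min b a ≤ 2*(b*a) := by
        rw [min_comm b a]
        calc J * min a b ≤ 2*(a*b) := hJab
          _ = 2*(b*a) := by ring
      have key := master hδ₂ hp0 (by linarith : p + 2*(δ-δ₂) ≤ p₂) hpp₁ hδd₂
        (by linarith : δ - δ₂ ≤ δ₁) hb ha hB hA hM hJ0 hJab' hMB' hMA'
      have hrw : (J ^ p * M ^ (2*δ)) * (min b a) ^ p = (J ^ p * M ^ (2*δ)) * (min a b) ^ p := by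
        rw [min_comm b a]
      rw [hrw] at key
      refine key.trans ?_
      have hcomm : b^p₂ * B^(2*δ₂) * (a^p₁ * A^(2*δ₁)) = a^p₁ * A^(2*δ₁) * (b^p₂ * B^(2*δ₂)) := by
        ring
      rw [hcomm]
      apply mul_le_mul_of_nonneg_right _ hD.le
      apply rpow_le_rpow_of_exponent_le one_le_two
      have := min_le_right δ₁ δ₂
      linarith
  have step1 : J ^ p * M ^ (2*δ) / (a^p₁ * A^(2*δ₁) * (b^p₂ * B^(2*δ₂)))
      ≤ C / (min a b) ^ p := by
    rw [div_le_div_iff₀ hD hminpow]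
    exact hbound
  refine step1.trans ?_
  have hC0 : (0:ℝ) ≤ C := by rw [hCdef]; positivity
  have hap : (0:ℝ) < a ^ p := by positivity
  have hbp : (0:ℝ) < b ^ p := by positivity
  rcases min_choice a b with h | h
  · rw [h, div_eq_mul_inv]
    have : (0:ℝ) ≤ C * (b^p)⁻¹ := by positivity
    linarith
  · rw [h, div_eq_mul_inv]
    have : (0:ℝ) ≤ C * (a^p)⁻¹ := by positivity
    linarith

lemma sum_inv_jap (p : ℝ) (hp : 1 < p) (m : ℕ+) :
    Summable (fun ℓ : ℕ+ => (jap (((m:ℕ):ℝ) - ((ℓ:ℕ):ℝ)) ^ p)⁻¹) ∧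
    ∑' ℓ : ℕ+, (jap (((m:ℕ):ℝ) - ((ℓ:ℕ):ℝ)) ^ p)⁻¹ ≤ 1 + 2 * rzeta p := by
  have hp0 : 0 ≤ p := by linarith
  set f : ℕ+ → ℝ := fun ℓ => (jap (((m:ℕ):ℝ) - ((ℓ:ℕ):ℝ)) ^ p)⁻¹ with hf
  have hf0 : ∀ ℓ, 0 ≤ f ℓ := fun ℓ => by
    have := jap_pos (((m:ℕ):ℝ) - ((ℓ:ℕ):ℝ)); positivity
  set g : ℕ+ → ℝ := fun d => (((d:ℕ):ℝ)^p)⁻¹ with hg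
  have hgsum : Summable g := (Real.summable_nat_rpow_inv.mpr hp).comp_injective PNat.coe_injective
  have hg0 : ∀ d, 0 ≤ g d := fun d => by
    have : (0:ℝ) < ((d:ℕ):ℝ) := by exact_mod_cast d.pos
    positivity
  have hrz : rzeta p = ∑' d : ℕ+, g d := rfl
  have hfg : ∀ ℓ : ℕ+, ∀ hlm : (ℓ:ℕ) < (m:ℕ), f ℓ = g ⟨(m:ℕ) - (ℓ:ℕ), Nat.sub_pos_of_lt hlm⟩ := by
    intro ℓ hlm
    have hjap : jap (((m:ℕ):ℝ) - ((ℓ:ℕ):ℝ)) = ((m:ℕ):ℝ) - ((ℓ:ℕ):ℝ) := by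
      have : ((ℓ:ℕ):ℝ) + 1 ≤ ((m:ℕ):ℝ) := by exact_mod_cast hlm
      rw [jap, abs_of_nonneg (by linarith), max_eq_right (by linarith)]
    have hcast : ((((⟨(m:ℕ) - (ℓ:ℕ), Nat.sub_pos_of_lt hlm⟩ : ℕ+) : ℕ)):ℝ) = ((m:ℕ):ℝ) - ((ℓ:ℕ):ℝ) := by
      rw [mk_coe, Nat.cast_sub hlm.le]
    simp only [hf, hg]; rw [hjap]; exact (congrArg (fun y : ℝ => (y^p)⁻¹) hcast).symm
  have hfg' : ∀ ℓ : ℕ+, ∀ hlm : (m:ℕ) < (ℓ:ℕ), f ℓ = g ⟨(ℓ:ℕ) - (m:ℕ), Nat.sub_pos_of_lt hlm⟩ := by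
    intro ℓ hlm
    have hjap : jap (((m:ℕ):ℝ) - ((ℓ:ℕ):ℝ)) = ((ℓ:ℕ):ℝ) - ((m:ℕ):ℝ) := by
      have : ((m:ℕ):ℝ) + 1 ≤ ((ℓ:ℕ):ℝ) := by exact_mod_cast hlm
      rw [jap, abs_of_nonpos (by linarith), max_eq_right (by linarith)]; ring
    have hcast : ((((⟨(ℓ:ℕ) - (m:ℕ), Nat.sub_pos_of_lt hlm⟩ : ℕ+) : ℕ)):ℝ) = ((ℓ:ℕ):ℝ) - ((m:ℕ):ℝ) := by
      rw [mk_coe, Nat.cast_sub hlm.le]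
    simp only [hf, hg]; rw [hjap]; exact (congrArg (fun y : ℝ => (y^p)⁻¹) hcast).symm
  have hbound : ∀ u : Finset ℕ+, ∑ x ∈ u, f x ≤ 1 + 2 * rzeta p := by
    intro u
    have step1 : ∑ x ∈ u, f x ≤ ∑ x ∈ insert m u, f x :=
      Finset.sum_le_sum_of_subset_of_nonneg (Finset.subset_insert m u) (fun i _ _ => hf0 i)
    have step2 : ∑ x ∈ insert m u, f x = f m + ∑ x ∈ (insert m u).erase m, f x := by
      rw [Finset.add_sum_erase _ f (Finset.mem_insert_self m u)]
    have hfm : f m = 1 := by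
      simp [hf, jap, Real.one_rpow]
    set t := (insert m u).erase m with ht
    have hsplit : ∑ x ∈ t, f x
        = ∑ x ∈ t.filter (fun ℓ : ℕ+ => (ℓ:ℕ) < (m:ℕ)), f x
        + ∑ x ∈ t.filter (fun ℓ : ℕ+ => ¬ (ℓ:ℕ) < (m:ℕ)), f x :=
      (Finset.sum_filter_add_sum_filter_not t _ f).symm
    have part1 : ∑ x ∈ t.filter (fun ℓ : ℕ+ => (ℓ:ℕ) < (m:ℕ)), f x ≤ rzeta p := by
      rw [hrz]
      set φ : ℕ+ → ℕ+ := fun ℓ => if h : (ℓ:ℕ) < (m:ℕ) then ⟨(m:ℕ) - (ℓ:ℕ), Nat.sub_pos_of_lt h⟩ else 1 with hφ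
      have heq : ∑ x ∈ t.filter (fun ℓ : ℕ+ => (ℓ:ℕ) < (m:ℕ)), f x
          = ∑ x ∈ (t.filter (fun ℓ : ℕ+ => (ℓ:ℕ) < (m:ℕ))).image φ, g x := by
        rw [Finset.sum_image]
        · apply Finset.sum_congr rfl
          intro x hx
          have hx' := (Finset.mem_filter.mp hx).2
          rw [hfg x hx', hφ]; simp [hx']
        · intro x hx y hy hxy
          have hx' := (Finset.mem_filter.mp hx).2
          have hy' := (Finset.mem_filter.mp hy).2
          simp only [hφ, hx', hy', dif_pos] at hxy
          replace hxy : (⟨(m:ℕ) - (x:ℕ), Nat.sub_pos_of_lt hx'⟩ : ℕ+) = ⟨(m:ℕ) - (y:ℕ), Nat.sub_pos_of_lt hy'⟩ :=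
            (dif_pos hx').symm.trans (hxy.trans (dif_pos hy'))
          have h2 : (m:ℕ) - (x:ℕ) = (m:ℕ) - (y:ℕ) := congrArg (fun z : ℕ+ => (z:ℕ)) hxy
          exact PNat.coe_injective (by omega)
      rw [heq]
      exact Summable.sum_le_tsum _ (fun d _ => hg0 d) hgsum
    have part2 : ∑ x ∈ t.filter (fun ℓ : ℕ+ => ¬ (ℓ:ℕ) < (m:ℕ)), f x ≤ rzeta p := by
      rw [hrz]
      set φ : ℕ+ → ℕ+ := fun ℓ => if h : (m:ℕ) < (ℓ:ℕ) then ⟨(ℓ:ℕ) - (m:ℕ), Nat.sub_pos_of_lt h⟩ else 1 with hφ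
      have hmem : ∀ x ∈ t.filter (fun ℓ : ℕ+ => ¬ (ℓ:ℕ) < (m:ℕ)), (m:ℕ) < (x:ℕ) := by
        intro x hx
        have h1 := Finset.mem_filter.mp hx
        have hne : x ≠ m := Finset.ne_of_mem_erase h1.1
        have h3 : (x:ℕ) ≠ (m:ℕ) := fun hc => hne (PNat.coe_injective hc)
        have := h1.2
        omega
      have heq : ∑ x ∈ t.filter (fun ℓ : ℕ+ => ¬ (ℓ:ℕ) < (m:ℕ)), f x
          = ∑ x ∈ (t.filter (fun ℓ : ℕ+ => ¬ (ℓ:ℕ) < (m:ℕ))).image φ, g x := by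
        rw [Finset.sum_image]
        · apply Finset.sum_congr rfl
          intro x hx
          have hx' := hmem x hx
          rw [hfg' x hx', hφ]; simp [hx']
        · intro x hx y hy hxy
          have hx' := hmem x hx
          have hy' := hmem y hy
          simp only [hφ, hx', hy', dif_pos] at hxy
          replace hxy : (⟨(x:ℕ) - (m:ℕ), Nat.sub_pos_of_lt hx'⟩ : ℕ+) = ⟨(y:ℕ) - (m:ℕ), Nat.sub_pos_of_lt hy'⟩ :=
            (dif_pos hx').symm.trans (hxy.trans (dif_pos hy'))
          have h2 : (x:ℕ) - (m:ℕ) = (y:ℕ) - (m:ℕ) := congrArg (fun z : ℕ+ => (z:ℕ)) hxy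
          exact PNat.coe_injective (by omega)
      rw [heq]
      exact Summable.sum_le_tsum _ (fun d _ => hg0 d) hgsum
    calc ∑ x ∈ u, f x ≤ f m + ∑ x ∈ t, f x := by rw [← step2]; exact step1
      _ ≤ 1 + (rzeta p + rzeta p) := by rw [hfm, hsplit]; linarith [part1, part2]
      _ = 1 + 2 * rzeta p := by ring
  exact ⟨summable_of_sum_le hf0 hbound, Summable.tsum_le_of_sum_le (summable_of_sum_le hf0 hbound) hbound⟩


/-- the summation estimate from the proof of Lemma 2.2. -/
theorem statement14 (p₁ p₂ δ₁ δ₂ p δ : ℝ)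
    (hp₁ : 1 < p₁) (hp₂ : 1 < p₂) (hδ₁ : 0 ≤ δ₁) (hδ₂ : 0 ≤ δ₂)
    (hp : 1 < p) (hpmin : p ≤ min p₁ p₂)
    (hδlow : max δ₁ δ₂ ≤ δ) (hδhigh : δ ≤ δ₁ + δ₂)
    (hsum : p + 2 * δ ≤ min (p₁ + 2 * δ₁) (p₂ + 2 * δ₂)) :
    ∀ m n : ℕ+,
      Summable (fun ℓ : ℕ+ =>
        jap (((m : ℕ) : ℝ) - ((n : ℕ) : ℝ)) ^ p * (((max m n : ℕ+) : ℕ) : ℝ) ^ (2 * δ) /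
          (jap (((m : ℕ) : ℝ) - ((ℓ : ℕ) : ℝ)) ^ p₁ *
            (((max m ℓ : ℕ+) : ℕ) : ℝ) ^ (2 * δ₁) *
            (jap (((n : ℕ) : ℝ) - ((ℓ : ℕ) : ℝ)) ^ p₂ *
              (((max n ℓ : ℕ+) : ℕ) : ℝ) ^ (2 * δ₂)))) ∧
      ∑' ℓ : ℕ+,
          jap (((m : ℕ) : ℝ) - ((n : ℕ) : ℝ)) ^ p * (((max m n : ℕ+) : ℕ) : ℝ) ^ (2 * δ) /
            (jap (((m : ℕ) : ℝ) - ((ℓ : ℕ) : ℝ)) ^ p₁ *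
              (((max m ℓ : ℕ+) : ℕ) : ℝ) ^ (2 * δ₁) *
              (jap (((n : ℕ) : ℝ) - ((ℓ : ℕ) : ℝ)) ^ p₂ *
                (((max n ℓ : ℕ+) : ℕ) : ℝ) ^ (2 * δ₂))) ≤
        2 ^ (p + 2 * (δ - min δ₁ δ₂)) * (2 + 4 * rzeta p) := by
  intro m n
  set C := (2:ℝ) ^ (p + 2 * (δ - min δ₁ δ₂)) with hCdef
  have hC0 : (0:ℝ) ≤ C := by rw [hCdef]; positivity
  set T : ℕ+ → ℝ := fun ℓ =>
    jap (((m : ℕ) : ℝ) - ((n : ℕ) : ℝ)) ^ p * (((max m n : ℕ+) : ℕ) : ℝ) ^ (2 * δ) /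
      (jap (((m : ℕ) : ℝ) - ((ℓ : ℕ) : ℝ)) ^ p₁ *
        (((max m ℓ : ℕ+) : ℕ) : ℝ) ^ (2 * δ₁) *
        (jap (((n : ℕ) : ℝ) - ((ℓ : ℕ) : ℝ)) ^ p₂ *
          (((max n ℓ : ℕ+) : ℕ) : ℝ) ^ (2 * δ₂))) with hT
  set G : ℕ+ → ℝ := fun ℓ =>
    C * (jap (((m:ℕ):ℝ) - ((ℓ:ℕ):ℝ)) ^ p)⁻¹ + C * (jap (((n:ℕ):ℝ) - ((ℓ:ℕ):ℝ)) ^ p)⁻¹ with hG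
  have hT0 : ∀ ℓ, 0 ≤ T ℓ := by
    intro ℓ
    rw [hT]
    have h1 := jap_pos (((m : ℕ) : ℝ) - ((n : ℕ) : ℝ))
    have h2 := jap_pos (((m : ℕ) : ℝ) - ((ℓ : ℕ) : ℝ))
    have h3 := jap_pos (((n : ℕ) : ℝ) - ((ℓ : ℕ) : ℝ))
    have h4 : (0:ℝ) < (((max m n : ℕ+) : ℕ) : ℝ) := by exact_mod_cast (max m n).pos
    have h5 : (0:ℝ) < (((max m ℓ : ℕ+) : ℕ) : ℝ) := by exact_mod_cast (max m ℓ).pos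
    have h6 : (0:ℝ) < (((max n ℓ : ℕ+) : ℕ) : ℝ) := by exact_mod_cast (max n ℓ).pos
    positivity
  have hTG : ∀ ℓ, T ℓ ≤ G ℓ := fun ℓ =>
    pointwise p₁ p₂ δ₁ δ₂ p δ hδ₁ hδ₂ hp hpmin hδlow hδhigh hsum m n ℓ
  have hs1 : Summable (fun ℓ : ℕ+ => C * (jap (((m:ℕ):ℝ) - ((ℓ:ℕ):ℝ)) ^ p)⁻¹) :=
    (sum_inv_jap p hp m).1.mul_left C
  have hs2 : Summable (fun ℓ : ℕ+ => C * (jap (((n:ℕ):ℝ) - ((ℓ:ℕ):ℝ)) ^ p)⁻¹) :=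
    (sum_inv_jap p hp n).1.mul_left C
  have hGsum : Summable G := hs1.add hs2
  have hTsum : Summable T := Summable.of_nonneg_of_le hT0 hTG hGsum
  refine ⟨hTsum, ?_⟩
  have h1 : ∑' ℓ, T ℓ ≤ ∑' ℓ, G ℓ := Summable.tsum_le_tsum hTG hTsum hGsum
  have h2 : ∑' ℓ, G ℓ
      = C * (∑' ℓ : ℕ+, (jap (((m:ℕ):ℝ) - ((ℓ:ℕ):ℝ)) ^ p)⁻¹)
      + C * (∑' ℓ : ℕ+, (jap (((n:ℕ):ℝ) - ((ℓ:ℕ):ℝ)) ^ p)⁻¹) := by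
    rw [hG, Summable.tsum_add hs1 hs2, tsum_mul_left, tsum_mul_left]
  have h3 : C * (∑' ℓ : ℕ+, (jap (((m:ℕ):ℝ) - ((ℓ:ℕ):ℝ)) ^ p)⁻¹) ≤ C * (1 + 2 * rzeta p) :=
    mul_le_mul_of_nonneg_left (sum_inv_jap p hp m).2 hC0
  have h4 : C * (∑' ℓ : ℕ+, (jap (((n:ℕ):ℝ) - ((ℓ:ℕ):ℝ)) ^ p)⁻¹) ≤ C * (1 + 2 * rzeta p) :=
    mul_le_mul_of_nonneg_left (sum_inv_jap p hp n).2 hC0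
  calc ∑' ℓ, T ℓ ≤ ∑' ℓ, G ℓ := h1
    _ ≤ C * (1 + 2 * rzeta p) + C * (1 + 2 * rzeta p) := by rw [h2]; linarith
    _ = C * (2 + 4 * rzeta p) := by ring

end
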